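/- The vector field X(x,y,z) = (y − z, −x + xz, x − xy) equals the cross product ∇H × ∇F where H = (x² + y² + z²)/2 and F = y − y²/2 + z − z²/2, at every point of ℝ³. -/

import Mathlib

/-- First partial derivative (∂/∂x) of a function on ℝ³ = ℝ×ℝ×ℝ. -/
noncomputable def pd1 (f : ℝ × ℝ × ℝ → ℝ) (p : ℝ × ℝ × ℝ) : ℝ := fderiv ℝ f p (1, 0, 0)

/-- Second partial derivative (∂/∂y). -/
noncomputable def pd2 (f : ℝ × ℝ × ℝ → ℝ) (p : ℝ × ℝ × ℝ) : ℝ := fderiv ℝ f p (0, 1, 0)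

/-- Third partial derivative (∂/∂z). -/
noncomputable def pd3 (f : ℝ × ℝ × ℝ → ℝ) (p : ℝ × ℝ × ℝ) : ℝ := fderiv ℝ f p (0, 0, 1)

/-- Gradient (∂f/∂x, ∂f/∂y, ∂f/∂z). -/
noncomputable def grad (f : ℝ × ℝ × ℝ → ℝ) (p : ℝ × ℝ × ℝ) : ℝ × ℝ × ℝ :=
  (pd1 f p, pd2 f p, pd3 f p)

/-- Standard cross product on ℝ³. -/
def cross (u v : ℝ × ℝ × ℝ) : ℝ × ℝ × ℝ :=
  (u.2.1 * v.2.2 - u.2.2 * v.2.1, u.2.2 * v.1 - u.1 * v.2.2, u.1 * v.2.1 - u.2.1 * v.1)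

/-- Euclidean inner product on ℝ³. -/
def dot (u v : ℝ × ℝ × ℝ) : ℝ := u.1 * v.1 + u.2.1 * v.2.1 + u.2.2 * v.2.2

/-- Divergence ∂X₁/∂x + ∂X₂/∂y + ∂X₃/∂z of a vector field on ℝ³. -/
noncomputable def divg (X : ℝ × ℝ × ℝ → ℝ × ℝ × ℝ) (p : ℝ × ℝ × ℝ) : ℝ :=
  pd1 (fun q => (X q).1) p + pd2 (fun q => (X q).2.1) p + pd3 (fun q => (X q).2.2) p

/-- Curl (∂h₃/∂y − ∂h₂/∂z, ∂h₁/∂z − ∂h₃/∂x, ∂h₂/∂x − ∂h₁/∂y) of a vector field on ℝ³. -/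
noncomputable def curl (X : ℝ × ℝ × ℝ → ℝ × ℝ × ℝ) (p : ℝ × ℝ × ℝ) : ℝ × ℝ × ℝ :=
  (pd2 (fun q => (X q).2.2) p - pd3 (fun q => (X q).2.1) p,
   pd3 (fun q => (X q).1) p - pd1 (fun q => (X q).2.2) p,
   pd1 (fun q => (X q).2.1) p - pd2 (fun q => (X q).1) p)

section
variable (p : ℝ × ℝ × ℝ)

private def e1 : ℝ × ℝ × ℝ →L[ℝ] ℝ := ContinuousLinearMap.fst ℝ ℝ (ℝ × ℝ)
private def e2 : ℝ × ℝ × ℝ →L[ℝ] ℝ :=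
  (ContinuousLinearMap.fst ℝ ℝ ℝ).comp (ContinuousLinearMap.snd ℝ ℝ (ℝ × ℝ))
private def e3 : ℝ × ℝ × ℝ →L[ℝ] ℝ :=
  (ContinuousLinearMap.snd ℝ ℝ ℝ).comp (ContinuousLinearMap.snd ℝ ℝ (ℝ × ℝ))

lemma h1 : HasFDerivAt (fun q : ℝ × ℝ × ℝ => q.1) e1 p := hasFDerivAt_fst
lemma h2 : HasFDerivAt (fun q : ℝ × ℝ × ℝ => q.2.1) e2 p := hasFDerivAt_snd.fst
lemma h3 : HasFDerivAt (fun q : ℝ × ℝ × ℝ => q.2.2) e3 p := hasFDerivAt_snd.snd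

lemma hH : HasFDerivAt (fun q : ℝ × ℝ × ℝ => (q.1 ^ 2 + q.2.1 ^ 2 + q.2.2 ^ 2) / 2)
    ((2:ℝ)⁻¹ • ((p.1 • e1 + p.1 • e1) + (p.2.1 • e2 + p.2.1 • e2) + (p.2.2 • e3 + p.2.2 • e3))) p := by
  have := ((((h1 p).mul (h1 p)).add ((h2 p).mul (h2 p))).add ((h3 p).mul (h3 p))).const_smul (2:ℝ)⁻¹
  refine this.congr_of_eventuallyEq (Filter.Eventually.of_forall fun q => ?_)
  simp only [Pi.add_apply, Pi.sub_apply, Pi.mul_apply, Pi.smul_apply, smul_eq_mul]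
  ring

lemma hF : HasFDerivAt (fun q : ℝ × ℝ × ℝ => (q.2.1 - q.2.1 ^ 2 / 2) + (q.2.2 - q.2.2 ^ 2 / 2))
    ((e2 - (2:ℝ)⁻¹ • (p.2.1 • e2 + p.2.1 • e2)) + (e3 - (2:ℝ)⁻¹ • (p.2.2 • e3 + p.2.2 • e3))) p := by
  have := ((h2 p).sub (((h2 p).mul (h2 p)).const_smul (2:ℝ)⁻¹)).add
    ((h3 p).sub (((h3 p).mul (h3 p)).const_smul (2:ℝ)⁻¹))
  refine this.congr_of_eventuallyEq (Filter.Eventually.of_forall fun q => ?_)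
  simp only [Pi.add_apply, Pi.sub_apply, Pi.mul_apply, Pi.smul_apply, smul_eq_mul]
  ring

lemma gradH : grad (fun q : ℝ × ℝ × ℝ => (q.1 ^ 2 + q.2.1 ^ 2 + q.2.2 ^ 2) / 2) p = p := by
  simp only [grad, pd1, pd2, pd3, (hH p).fderiv]
  simp [e1, e2, e3]
  exact Prod.ext (by ring) (Prod.ext (by ring) (by ring))

lemma gradF : grad (fun q : ℝ × ℝ × ℝ => (q.2.1 - q.2.1 ^ 2 / 2) + (q.2.2 - q.2.2 ^ 2 / 2)) p
    = (0, 1 - p.2.1, 1 - p.2.2) := by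
  simp only [grad, pd1, pd2, pd3, (hF p).fderiv]
  simp [e1, e2, e3]
  exact ⟨by ring, by ring⟩

end

/-- X(x,y,z) = (y − z, −x + xz, x − xy) equals ∇H × ∇F for
H = (x²+y²+z²)/2 and F = y − y²/2 + z − z²/2, at every point of ℝ³. -/
theorem lorenz_eq_gradH_cross_gradF :
    ∀ p : ℝ × ℝ × ℝ,
      cross (grad (fun q => (q.1 ^ 2 + q.2.1 ^ 2 + q.2.2 ^ 2) / 2) p)
            (grad (fun q => (q.2.1 - q.2.1 ^ 2 / 2) + (q.2.2 - q.2.2 ^ 2 / 2)) p) =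
        (p.2.1 - p.2.2, -p.1 + p.1 * p.2.2, p.1 - p.1 * p.2.1) := by
  intro p
  rw [gradH p, gradF p]
  simp only [cross]
  exact Prod.ext (by ring) (Prod.ext (by ring) (by ring))
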